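/- Let (X, d) be a metric space, U a closed process on X, and 𝒟 a universe in 𝒫(X). Assume there exists a pullback 𝒟-absorbing family D̂₀ = {D₀(t) : t ∈ ℝ} for U, that U is pullback 𝒟-asymptotically compact, and moreover that D̂₀ itself belongs to 𝒟. Then the pullback 𝒟-attractor A(t) = cl(⋃_{D̂ ∈ 𝒟} Λ(D̂, t)), where Λ(D̂, t) = ⋂_{s ≤ t} cl(⋃_{τ ≤ s} U(t, τ)D(τ)), satisfies A(t) = Λ(D̂₀, t) and A(t) ⊆ cl(D₀(t)) for every t ∈ ℝ. -/

import Mathlib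

open Filter Set

/-- If the pullback `𝒟`-absorbing family `D̂₀` itself belongs to the universe `𝒟`, then
the pullback `𝒟`-attractor `A(t) = cl(⋃_{D̂ ∈ 𝒟} Λ(D̂, t))`, with
`Λ(D̂, t) = ⋂_{s ≤ t} cl(⋃_{τ ≤ s} U(t,τ)D(τ))`, satisfies
`A(t) = Λ(D̂₀, t)` and `A(t) ⊆ cl(D₀(t))` for every `t`. -/
theorem pullback_attractor_eq_of_absorbing_mem {X : Type*} [MetricSpace X]
    (U : ℝ → ℝ → X → X)
    (hU1 : ∀ τ : ℝ, ∀ x : X, U τ τ x = x)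
    (hU2 : ∀ τ s t : ℝ, τ ≤ s → s ≤ t → ∀ x : X, U t τ x = U t s (U s τ x))
    (hclosed : ∀ τ t : ℝ, τ ≤ t → ∀ (xn : ℕ → X) (x y : X),
      Tendsto xn atTop (nhds x) →
      Tendsto (fun n => U t τ (xn n)) atTop (nhds y) →
      U t τ x = y)
    (𝒟 : Set (ℝ → Set X)) (h𝒟ne : 𝒟.Nonempty)
    (h𝒟 : ∀ D ∈ 𝒟, ∀ t : ℝ, (D t).Nonempty)
    (D₀ : ℝ → Set X) (hD₀ne : ∀ t : ℝ, (D₀ t).Nonempty)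
    (habs : ∀ D ∈ 𝒟, ∀ t : ℝ, ∃ τ₀ ≤ t, ∀ τ ≤ τ₀, U t τ '' D τ ⊆ D₀ t)
    (hcomp : ∀ t : ℝ, ∀ D ∈ 𝒟, ∀ (τn : ℕ → ℝ) (xn : ℕ → X),
      Tendsto τn atTop atBot → (∀ n, xn n ∈ D (τn n)) →
      ∃ (φ : ℕ → ℕ) (z : X), StrictMono φ ∧
        Tendsto (fun n => U t (τn (φ n)) (xn (φ n))) atTop (nhds z))
    (hD₀mem : D₀ ∈ 𝒟)
    (A : ℝ → Set X)
    (hA : A = fun t =>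
      closure (⋃ D ∈ 𝒟, ⋂ s ∈ Iic t, closure (⋃ τ ∈ Iic s, U t τ '' D τ))) :
    ∀ t : ℝ,
      A t = ⋂ s ∈ Iic t, closure (⋃ τ ∈ Iic s, U t τ '' D₀ τ) ∧
      A t ⊆ closure (D₀ t) := by
  subst hA
  intro t
  set Λ : (ℝ → Set X) → Set X :=
    fun D => ⋂ s ∈ Iic t, closure (⋃ τ ∈ Iic s, U t τ '' D τ) with hΛ
  have key : ∀ D ∈ 𝒟, Λ D ⊆ Λ D₀ := by
    intro D hD x hx
    simp only [hΛ, mem_iInter, mem_Iic] at hx ⊢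
    intro s hs
    obtain ⟨τ₀, hτ₀s, habsD⟩ := habs D hD s
    have hx' := hx τ₀ (hτ₀s.trans hs)
    refine closure_mono ?_ hx'
    refine iUnion₂_subset fun τ hτ y hy => ?_
    obtain ⟨z, hz, rfl⟩ := hy
    have hτs : τ ≤ τ₀ := mem_Iic.1 hτ
    have h1 : U s τ z ∈ D₀ s := habsD τ hτs ⟨z, hz, rfl⟩
    have h2 : U t τ z = U t s (U s τ z) := hU2 τ s t (hτs.trans hτ₀s) hs z
    rw [h2]
    exact mem_iUnion₂.2 ⟨s, le_rfl, ⟨U s τ z, h1, rfl⟩⟩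
  have hclosedΛ : IsClosed (Λ D₀) :=
    isClosed_biInter fun s _ => isClosed_closure
  have hmain : closure (⋃ D ∈ 𝒟, Λ D) = Λ D₀ := by
    apply subset_antisymm
    · exact closure_minimal (iUnion₂_subset key) hclosedΛ
    · exact (subset_iUnion₂ (s := fun D _ => Λ D) D₀ hD₀mem).trans subset_closure
  refine ⟨hmain, ?_⟩
  show closure (⋃ D ∈ 𝒟, Λ D) ⊆ closure (D₀ t)
  rw [hmain]
  obtain ⟨τ₀, hτ₀t, hab⟩ := habs D₀ hD₀mem t
  refine (biInter_subset_of_mem (mem_Iic.2 hτ₀t)).trans ?_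
  refine closure_mono (iUnion₂_subset fun τ hτ => hab τ (mem_Iic.1 hτ))
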